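/- Let d ≥ 1 and suppose a strategy for the (2,3) parity-oblivious random exclusion code, consisting of density matrices ρ_x on ℂ^d for x ∈ (ZMod 3)² satisfying full parity-obliviousness and POVMs {M_{b|y}}_{b∈ZMod 3} on ℂ^d for y ∈ {1,2}, achieves success probability strictly greater than 2/3 + 1/(3·√2). Then d ≥ 3. -/

import Mathlib

open Finset
open scoped ComplexOrder

section PorecAuxGeom
open scoped RealInnerProductSpace


variable {E : Type*} [NormedAddCommGroup E] [InnerProductSpace ℝ E]
variable {ι : Type*} [Fintype ι] [Nonempty ι] [DecidableEq ι]

lemma cheb (g : ι → E) :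
    ∃ (c : E) (w : ι → ℝ), (∀ i, 0 ≤ w i) ∧ (∑ i, w i) = 1 ∧ (∑ i, w i • g i) = c ∧
      ∀ j, ‖g j - c‖ ^ 2 ≤ ∑ i, w i * ‖g i - c‖ ^ 2 := by
  classical
  obtain ⟨w, hwS, hmax⟩ := (isCompact_stdSimplex ℝ ι).exists_isMaxOn
    ⟨_, ite_eq_mem_stdSimplex ℝ (Classical.arbitrary ι)⟩
    (f := fun w : ι → ℝ => (∑ i, w i * ‖g i‖ ^ 2) - ‖∑ i, w i • g i‖ ^ 2)
    (by
      apply Continuous.continuousOn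
      apply Continuous.sub
      · exact continuous_finset_sum _ fun i _ => ((continuous_apply i).mul continuous_const)
      · exact ((continuous_finset_sum _ fun i _ =>
          ((continuous_apply i).smul continuous_const)).norm).pow 2)
  obtain ⟨hw0, hw1⟩ := hwS
  set c : E := ∑ i, w i • g i with hc
  refine ⟨c, w, hw0, hw1, rfl, ?_⟩
  set SW : ℝ := ∑ i, w i * ‖g i‖ ^ 2 with hSW
  have hins : ∑ i, w i * ⟪g i, c⟫ = ‖c‖ ^ 2 := by
    rw [← real_inner_self_eq_norm_sq, hc, sum_inner]
    exact Finset.sum_congr rfl fun i _ => (real_inner_smul_left _ _ _).symm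
  have hfw : ∑ i, w i * ‖g i - c‖ ^ 2 = SW - ‖c‖ ^ 2 := by
    have e1 : ∑ i, w i * ‖g i - c‖ ^ 2
        = (∑ i, w i * ‖g i‖ ^ 2) - 2 * (∑ i, w i * ⟪g i, c⟫) + (∑ i, w i) * ‖c‖ ^ 2 := by
      rw [Finset.mul_sum, Finset.sum_mul, ← Finset.sum_sub_distrib, ← Finset.sum_add_distrib]
      exact Finset.sum_congr rfl fun i _ => by rw [norm_sub_sq_real]; ring
    rw [e1, hins, hw1, hSW]; ring
  intro j
  by_contra hD
  push_neg at hD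
  rw [hfw] at hD
  set D := ‖g j - c‖ ^ 2 with hDdef
  set F := SW - ‖c‖ ^ 2 with hF
  have hF0 : 0 ≤ F := by
    rw [← hfw]
    exact Finset.sum_nonneg fun i _ => mul_nonneg (hw0 i) (by positivity)
  have hDpos : 0 < D := lt_of_le_of_lt hF0 hD
  set t : ℝ := (D - F) / (2 * D) with ht
  have ht0 : 0 < t := div_pos (by linarith) (by linarith)
  have ht1 : t ≤ 1 := by
    rw [ht, div_le_one (by linarith)]; nlinarith
  set w' : ι → ℝ := fun i => (1 - t) * w i + t * (if i = j then 1 else 0) with hw'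
  have hw'S : w' ∈ stdSimplex ℝ ι := by
    constructor
    · intro i
      have h1 := hw0 i
      have h2 := mul_nonneg (by linarith : (0:ℝ) ≤ 1 - t) h1
      rcases eq_or_ne i j with h | h
      · subst h; simp only [hw', ite_true]; nlinarith
      · simp only [hw', h, ite_false]; nlinarith
    · simp only [hw', Finset.sum_add_distrib, ← Finset.mul_sum, hw1,
        Finset.sum_ite_eq', Finset.mem_univ, if_true]
      ring
  have hle : (∑ i, w' i * ‖g i‖ ^ 2) - ‖∑ i, w' i • g i‖ ^ 2 ≤ SW - ‖c‖ ^ 2 := hmax hw'S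
  have hcw' : ∑ i, w' i • g i = c + t • (g j - c) := by
    have e2 : ∑ i, (if i = j then (1:ℝ) else 0) • g i = g j := by
      rw [Finset.sum_congr rfl (fun i _ => by rw [ite_smul, one_smul, zero_smul])]
      simp
    have e3 : ∑ i, w' i • g i
        = (1 - t) • (∑ i, w i • g i) + t • (∑ i, (if i = j then (1:ℝ) else 0) • g i) := by
      rw [Finset.smul_sum, Finset.smul_sum, ← Finset.sum_add_distrib]
      exact Finset.sum_congr rfl fun i _ => by rw [hw']; module
    rw [e3, e2, ← hc]
    module
  have h1 : ∑ i, w' i * ‖g i‖ ^ 2 = (1 - t) * SW + t * ‖g j‖ ^ 2 := by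
    simp only [hw', add_mul, Finset.sum_add_distrib]
    congr 1
    · rw [hSW, Finset.mul_sum]
      exact Finset.sum_congr rfl fun i _ => by ring
    · rw [Finset.sum_congr rfl (fun i _ =>
        show (t * if i = j then (1:ℝ) else 0) * ‖g i‖ ^ 2
            = (if i = j then t * ‖g j‖ ^ 2 else 0) from by
          by_cases h : i = j <;> simp [h])]
      simp
  have h2 : ‖∑ i, w' i • g i‖ ^ 2 = ‖c‖ ^ 2 + 2 * t * ⟪c, g j - c⟫ + t ^ 2 * D := by
    rw [hcw', norm_add_sq_real, real_inner_smul_right, norm_smul, hDdef,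
      Real.norm_eq_abs, mul_pow, sq_abs]
    ring
  have h3 : D - F = (‖g j‖ ^ 2 - SW) - 2 * ⟪c, g j - c⟫ := by
    rw [hDdef, hF, norm_sub_sq_real, inner_sub_right, real_inner_self_eq_norm_sq,
      real_inner_comm]
    ring
  have hkey : t * (D - F) - t ^ 2 * D = t ^ 2 * D := by
    rw [ht]; field_simp; ring
  rw [h1, h2] at hle
  nlinarith [hle, h3, hkey, mul_pos (mul_pos ht0 ht0) hDpos]


lemma geom (g h u v : ι → E) (hu0 : ∑ b, u b = 0) (hv0 : ∑ b, v b = 0)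
    (hu1 : ∑ b, ‖u b‖ ≤ 1) (hv1 : ∑ b, ‖v b‖ ≤ 1)
    (hgh : ∀ a b, ‖g a + h b‖ ≤ 1) :
    -Real.sqrt 2 ≤ (∑ b, ⟪g b, u b⟫) + (∑ b, ⟪h b, v b⟫) := by
  classical
  obtain ⟨c, w, hw0, hw1, hwc, hwmax⟩ := cheb g
  obtain ⟨c', w', hw'0, hw'1, hw'c, hw'max⟩ := cheb h
  set A2 : ℝ := ∑ i, w i * ‖g i - c‖ ^ 2 with hA2
  set B2 : ℝ := ∑ i, w' i * ‖h i - c'‖ ^ 2 with hB2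
  have hA2nn : 0 ≤ A2 := Finset.sum_nonneg fun i _ => mul_nonneg (hw0 i) (by positivity)
  have hB2nn : 0 ≤ B2 := Finset.sum_nonneg fun i _ => mul_nonneg (hw'0 i) (by positivity)
  have zg : ∑ a, w a • (g a - c) = 0 := by
    rw [Finset.sum_congr rfl (fun a _ => smul_sub (w a) (g a) c), Finset.sum_sub_distrib,
      hwc, ← Finset.sum_smul, hw1, one_smul, sub_self]
  have zh : ∑ b, w' b • (h b - c') = 0 := by
    rw [Finset.sum_congr rfl (fun b _ => smul_sub (w' b) (h b) c'), Finset.sum_sub_distrib,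
      hw'c, ← Finset.sum_smul, hw'1, one_smul, sub_self]
  have z1 : ∀ x : E, ∑ a, w a * ⟪g a - c, x⟫ = 0 := by
    intro x
    rw [Finset.sum_congr rfl (fun a _ => (real_inner_smul_left (g a - c) x (w a)).symm),
      ← sum_inner, zg, inner_zero_left]
  have z2 : ∀ x : E, ∑ b, w' b * ⟪h b - c', x⟫ = 0 := by
    intro x
    rw [Finset.sum_congr rfl (fun b _ => (real_inner_smul_left (h b - c') x (w' b)).symm),
      ← sum_inner, zh, inner_zero_left]
  have e : ∀ a b, ‖g a + h b‖ ^ 2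
      = ‖g a - c‖ ^ 2 + ‖h b - c'‖ ^ 2 + ‖c + c'‖ ^ 2 + 2 * ⟪h b - c', g a - c⟫
        + 2 * ⟪g a - c, c + c'⟫ + 2 * ⟪h b - c', c + c'⟫ := by
    intro a b
    have habs : g a + h b = ((g a - c) + (h b - c')) + (c + c') := by abel
    rw [habs, norm_add_sq_real, norm_add_sq_real, inner_add_left, real_inner_comm (g a - c)]
    ring
  have inner_eq : ∀ a, ∑ b, (w a * w' b) * ‖g a + h b‖ ^ 2
      = w a * ‖g a - c‖ ^ 2 + B2 * w a + ‖c + c'‖ ^ 2 * w a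
        + 2 * (w a * ⟪g a - c, c + c'⟫) := by
    intro a
    have estep : ∀ b, (w a * w' b) * ‖g a + h b‖ ^ 2
        = (w a * ‖g a - c‖ ^ 2) * w' b + w a * (w' b * ‖h b - c'‖ ^ 2)
          + (‖c + c'‖ ^ 2 * w a) * w' b
          + (2 * w a) * (w' b * ⟪h b - c', g a - c⟫)
          + (2 * (w a * ⟪g a - c, c + c'⟫)) * w' b
          + (2 * w a) * (w' b * ⟪h b - c', c + c'⟫) := fun b => by rw [e a b]; ring
    rw [Finset.sum_congr rfl (fun b _ => estep b)]
    simp only [Finset.sum_add_distrib, ← Finset.mul_sum, ← Finset.sum_mul]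
    rw [z2, z2, hw'1, ← hB2]
    ring
  have key : ∑ a, ∑ b, (w a * w' b) * ‖g a + h b‖ ^ 2 = A2 + B2 + ‖c + c'‖ ^ 2 := by
    rw [Finset.sum_congr rfl (fun a _ => inner_eq a)]
    simp only [Finset.sum_add_distrib, ← Finset.mul_sum, ← Finset.sum_mul]
    rw [z1, hw1, ← hA2]
    ring
  have hub : ∑ a, ∑ b, (w a * w' b) * ‖g a + h b‖ ^ 2 ≤ 1 := by
    have step : ∀ a, ∑ b, (w a * w' b) * ‖g a + h b‖ ^ 2 ≤ ∑ b, w a * w' b := by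
      intro a
      apply Finset.sum_le_sum
      intro b _
      have h1 : ‖g a + h b‖ ^ 2 ≤ 1 := by
        have := hgh a b
        nlinarith [norm_nonneg (g a + h b)]
      nlinarith [mul_nonneg (hw0 a) (hw'0 b)]
    calc ∑ a, ∑ b, (w a * w' b) * ‖g a + h b‖ ^ 2 ≤ ∑ a, ∑ b, w a * w' b :=
          Finset.sum_le_sum fun a _ => step a
      _ = 1 := by
          simp only [← Finset.mul_sum, hw'1, mul_one]
          exact hw1
  have hAB1 : A2 + B2 ≤ 1 := by nlinarith [sq_nonneg ‖c + c'‖, key, hub]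
  -- bound the objective sums
  have bound1 : -Real.sqrt A2 ≤ ∑ b, ⟪g b, u b⟫ := by
    have split : ∑ b, ⟪g b - c, u b⟫ = ∑ b, ⟪g b, u b⟫ := by
      rw [Finset.sum_congr rfl (fun b _ => inner_sub_left (g b) c (u b)),
        Finset.sum_sub_distrib, ← inner_sum, hu0, inner_zero_right, sub_zero]
    rw [← split]
    have hterm : ∀ b, -(Real.sqrt A2 * ‖u b‖) ≤ ⟪g b - c, u b⟫ := by
      intro b
      have hgb : ‖g b - c‖ ≤ Real.sqrt A2 :=
        calc ‖g b - c‖ = Real.sqrt (‖g b - c‖ ^ 2) := (Real.sqrt_sq (norm_nonneg _)).symm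
          _ ≤ Real.sqrt A2 := Real.sqrt_le_sqrt (hwmax b)
      calc -(Real.sqrt A2 * ‖u b‖) ≤ -(‖g b - c‖ * ‖u b‖) :=
            neg_le_neg (mul_le_mul_of_nonneg_right hgb (norm_nonneg _))
        _ ≤ ⟪g b - c, u b⟫ := neg_le_of_abs_le (abs_real_inner_le_norm _ _)
    calc -Real.sqrt A2 ≤ -(Real.sqrt A2 * ∑ b, ‖u b‖) :=
          neg_le_neg (mul_le_of_le_one_right (Real.sqrt_nonneg A2) hu1)
      _ = ∑ b, -(Real.sqrt A2 * ‖u b‖) := by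
          rw [Finset.mul_sum, ← Finset.sum_neg_distrib]
      _ ≤ ∑ b, ⟪g b - c, u b⟫ := Finset.sum_le_sum fun b _ => hterm b
  have bound2 : -Real.sqrt B2 ≤ ∑ b, ⟪h b, v b⟫ := by
    have split : ∑ b, ⟪h b - c', v b⟫ = ∑ b, ⟪h b, v b⟫ := by
      rw [Finset.sum_congr rfl (fun b _ => inner_sub_left (h b) c' (v b)),
        Finset.sum_sub_distrib, ← inner_sum, hv0, inner_zero_right, sub_zero]
    rw [← split]
    have hterm : ∀ b, -(Real.sqrt B2 * ‖v b‖) ≤ ⟪h b - c', v b⟫ := by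
      intro b
      have hgb : ‖h b - c'‖ ≤ Real.sqrt B2 :=
        calc ‖h b - c'‖ = Real.sqrt (‖h b - c'‖ ^ 2) := (Real.sqrt_sq (norm_nonneg _)).symm
          _ ≤ Real.sqrt B2 := Real.sqrt_le_sqrt (hw'max b)
      calc -(Real.sqrt B2 * ‖v b‖) ≤ -(‖h b - c'‖ * ‖v b‖) :=
            neg_le_neg (mul_le_mul_of_nonneg_right hgb (norm_nonneg _))
        _ ≤ ⟪h b - c', v b⟫ := neg_le_of_abs_le (abs_real_inner_le_norm _ _)
    calc -Real.sqrt B2 ≤ -(Real.sqrt B2 * ∑ b, ‖v b‖) :=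
          neg_le_neg (mul_le_of_le_one_right (Real.sqrt_nonneg B2) hv1)
      _ = ∑ b, -(Real.sqrt B2 * ‖v b‖) := by
          rw [Finset.mul_sum, ← Finset.sum_neg_distrib]
      _ ≤ ∑ b, ⟪h b - c', v b⟫ := Finset.sum_le_sum fun b _ => hterm b
  have hsqrt : Real.sqrt A2 + Real.sqrt B2 ≤ Real.sqrt 2 := by
    nlinarith [Real.sq_sqrt hA2nn, Real.sq_sqrt hB2nn, Real.sq_sqrt (by norm_num : (0:ℝ) ≤ 2),
      Real.sqrt_nonneg A2, Real.sqrt_nonneg B2, Real.sqrt_nonneg 2,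
      sq_nonneg (Real.sqrt A2 - Real.sqrt B2),
      sq_nonneg (Real.sqrt A2 + Real.sqrt B2 - Real.sqrt 2),
      sq_nonneg (Real.sqrt A2 + Real.sqrt B2 + Real.sqrt 2)]
  linarith [bound1, bound2]

end PorecAuxGeom

section PorecAuxBloch
open scoped RealInnerProductSpace


namespace PorecAux

lemma zmod3sum {M : Type*} [AddCommMonoid M] (f : ZMod 3 → M) :
    ∑ x : ZMod 3, f x = f 0 + f 1 + f 2 := by
  show ∑ x : Fin 3, f x = _
  exact Fin.sum_univ_three f


noncomputable def bT : Matrix (Fin 2) (Fin 2) ℂ →+ ℝ where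
  toFun X := (X 0 0).re + (X 1 1).re
  map_zero' := by simp
  map_add' X Y := by simp [Matrix.add_apply]; ring

noncomputable def bV : Matrix (Fin 2) (Fin 2) ℂ →+ EuclideanSpace ℝ (Fin 3) where
  toFun X := (WithLp.equiv 2 (Fin 3 → ℝ)).symm
    ![(X 0 1).re, (X 0 1).im, ((X 0 0).re - (X 1 1).re) / 2]
  map_zero' := by
    ext i
    fin_cases i <;> simp
  map_add' X Y := by
    ext i
    fin_cases i <;> simp [Matrix.add_apply] <;> ring

lemma bV_apply (X : Matrix (Fin 2) (Fin 2) ℂ) :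
    bV X = (WithLp.equiv 2 (Fin 3 → ℝ)).symm
      ![(X 0 1).re, (X 0 1).im, ((X 0 0).re - (X 1 1).re) / 2] := rfl

lemma bT_one : bT 1 = 2 := by
  simp [bT, Matrix.one_apply]
  norm_num

lemma bV_one : bV 1 = 0 := by
  ext i
  fin_cases i <;> simp [bV, Matrix.one_apply]

lemma inner3 (x y : EuclideanSpace ℝ (Fin 3)) :
    ⟪x, y⟫ = x 0 * y 0 + x 1 * y 1 + x 2 * y 2 := by
  simp [PiLp.inner_apply, RCLike.inner_apply, Fin.sum_univ_three]; ring

lemma normsq3 (x : EuclideanSpace ℝ (Fin 3)) :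
    ‖x‖ ^ 2 = x 0 ^ 2 + x 1 ^ 2 + x 2 ^ 2 := by
  rw [← real_inner_self_eq_norm_sq, inner3]
  ring

lemma herm_entries {X : Matrix (Fin 2) (Fin 2) ℂ} (h : X.IsHermitian) :
    (X 0 0).im = 0 ∧ (X 1 1).im = 0 ∧ (X 1 0).re = (X 0 1).re ∧ (X 1 0).im = -(X 0 1).im := by
  have h00 := congrFun (congrFun h.symm 0) 0
  have h11 := congrFun (congrFun h.symm 1) 1
  have h10 := congrFun (congrFun h.symm 1) 0
  simp only [Matrix.conjTranspose_apply, RCLike.star_def] at h00 h11 h10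
  refine ⟨?_, ?_, ?_, ?_⟩
  · have := congrArg Complex.im h00; simp at this; linarith
  · have := congrArg Complex.im h11; simp at this; linarith
  · have := congrArg Complex.re h10; simpa using this
  · have := congrArg Complex.im h10; simp at this; linarith

lemma reTrace_mul {X Y : Matrix (Fin 2) (Fin 2) ℂ}
    (hX : X.IsHermitian) (hY : Y.IsHermitian) :
    ((X * Y).trace).re = bT X * bT Y / 2 + 2 * ⟪bV X, bV Y⟫ := by
  obtain ⟨hx1, hx2, hx3, hx4⟩ := herm_entries hX
  obtain ⟨hy1, hy2, hy3, hy4⟩ := herm_entries hY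
  rw [inner3]
  have : (X * Y).trace = X 0 0 * Y 0 0 + X 0 1 * Y 1 0 + (X 1 0 * Y 0 1 + X 1 1 * Y 1 1) := by
    simp [Matrix.trace, Matrix.mul_apply, Fin.sum_univ_two, Matrix.diag]
  rw [this]
  simp only [Complex.add_re, Complex.mul_re, bT, bV, AddMonoidHom.coe_mk, ZeroHom.coe_mk]
  simp only [WithLp.equiv_symm_apply, PiLp.toLp_apply, WithLp.ofLp_toLp, Matrix.cons_val_zero, Matrix.cons_val_one,
    Matrix.head_cons, Matrix.cons_val_two, Matrix.tail_cons]
  rw [hx1, hx2, hy1, hy2, hx3, hx4, hy3, hy4]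
  ring

lemma psd_facts {X : Matrix (Fin 2) (Fin 2) ℂ} (h : X.PosSemidef) :
    0 ≤ (X 0 0).re ∧ 0 ≤ (X 1 1).re ∧
      (X 0 1).re ^ 2 + (X 0 1).im ^ 2 ≤ (X 0 0).re * (X 1 1).re := by
  obtain ⟨hx1, hx2, hx3, hx4⟩ := herm_entries h.isHermitian
  have key : ∀ s r : ℝ, 0 ≤ ((X 0 1).re ^ 2 + (X 0 1).im ^ 2) * (X 0 0).re * s ^ 2
      + 2 * ((X 0 1).re ^ 2 + (X 0 1).im ^ 2) * s * r + (X 1 1).re * r ^ 2 := by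
    intro s r
    have h2 := h.dotProduct_mulVec_nonneg ![(s : ℂ) * X 0 1, (r : ℂ)]
    rw [Complex.le_def] at h2
    have h2re := h2.1
    simp only [dotProduct, Matrix.mulVec, Fin.sum_univ_two, Pi.star_apply,
      Matrix.cons_val_zero, Matrix.cons_val_one, Matrix.head_cons, Complex.zero_re] at h2re
    simp only [Complex.add_re, Complex.mul_re, Complex.mul_im, Complex.add_im,
      Complex.ofReal_re, Complex.ofReal_im, RCLike.star_def, Complex.conj_re,
      Complex.conj_im] at h2re
    rw [hx1, hx2, hx3, hx4] at h2re
    nlinarith [h2re]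
  have h00 : 0 ≤ (X 0 0).re := by
    have h2 := h.dotProduct_mulVec_nonneg ![1, 0]
    rw [Complex.le_def] at h2
    have h2re := h2.1
    simp [dotProduct, Matrix.mulVec, Fin.sum_univ_two] at h2re
    exact h2re
  have h11 : 0 ≤ (X 1 1).re := by
    have h2 := h.dotProduct_mulVec_nonneg ![0, 1]
    rw [Complex.le_def] at h2
    have h2re := h2.1
    simp [dotProduct, Matrix.mulVec, Fin.sum_univ_two] at h2re
    exact h2re
  refine ⟨h00, h11, ?_⟩
  set N := (X 0 1).re ^ 2 + (X 0 1).im ^ 2 with hN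
  have hNnn : 0 ≤ N := by positivity
  rcases eq_or_lt_of_le hNnn with hN0 | hNpos
  · nlinarith
  · by_cases h110 : (X 1 1).re = 0
    · have k1 := key 1 (-(X 0 0).re)
      rw [h110] at k1
      have k2 := key 1 (-1)
      rw [h110] at k2
      nlinarith
    · have k1 := key (X 1 1).re (-N)
      have hX11 : 0 < (X 1 1).re := lt_of_le_of_ne h11 (Ne.symm h110)
      nlinarith [k1, mul_pos hX11 hNpos, mul_pos (mul_pos hX11 hNpos) hX11]

lemma psd_norm_le {X : Matrix (Fin 2) (Fin 2) ℂ} (h : X.PosSemidef) :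
    ‖bV X‖ ≤ bT X / 2 := by
  obtain ⟨h00, h11, hdet⟩ := psd_facts h
  have hsq : ‖bV X‖ ^ 2 ≤ (bT X / 2) ^ 2 := by
    rw [normsq3]
    simp only [bV, bT, AddMonoidHom.coe_mk, ZeroHom.coe_mk, WithLp.equiv_symm_apply, PiLp.toLp_apply, WithLp.ofLp_toLp,
      Matrix.cons_val_zero, Matrix.cons_val_one, Matrix.head_cons, Matrix.cons_val_two,
      Matrix.tail_cons]
    nlinarith
  have hbt : 0 ≤ bT X / 2 := by
    simp only [bT, AddMonoidHom.coe_mk, ZeroHom.coe_mk]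
    linarith
  nlinarith [norm_nonneg (bV X)]

end PorecAux

end PorecAuxBloch


open scoped RealInnerProductSpace in
/-- **Semi-device-independent dimension witness.** If a strategy for the `(2,3)`
parity-oblivious random exclusion code, consisting of density matrices on `ℂ^d` satisfying
full parity-obliviousness and POVMs, achieves POREC success probability strictly greater
than `2/3 + 1/(3√2)`, then `d ≥ 3`. -/
theorem porec23_dimension_witness
    (d : ℕ) (hd : 1 ≤ d)
    (ρ : ZMod 3 → ZMod 3 → Matrix (Fin d) (Fin d) ℂ)
    (hρ_psd : ∀ x₁ x₂, (ρ x₁ x₂).PosSemidef)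
    (hρ_tr : ∀ x₁ x₂, (ρ x₁ x₂).trace = 1)
    (M₁ M₂ : ZMod 3 → Matrix (Fin d) (Fin d) ℂ)
    (hM₁_psd : ∀ b, (M₁ b).PosSemidef) (hM₂_psd : ∀ b, (M₂ b).PosSemidef)
    (hM₁_sum : ∑ b : ZMod 3, M₁ b = 1) (hM₂_sum : ∑ b : ZMod 3, M₂ b = 1)
    (hPO₁ : ∀ k k' : ZMod 3,
      ∑ x ∈ Finset.univ.filter (fun x : ZMod 3 × ZMod 3 => x.1 + x.2 = k), ρ x.1 x.2 =
      ∑ x ∈ Finset.univ.filter (fun x : ZMod 3 × ZMod 3 => x.1 + x.2 = k'), ρ x.1 x.2)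
    (hPO₂ : ∀ k k' : ZMod 3,
      ∑ x ∈ Finset.univ.filter (fun x : ZMod 3 × ZMod 3 => x.1 + 2 * x.2 = k), ρ x.1 x.2 =
      ∑ x ∈ Finset.univ.filter (fun x : ZMod 3 × ZMod 3 => x.1 + 2 * x.2 = k'), ρ x.1 x.2)
    (hQ : 2 / 3 + 1 / (3 * Real.sqrt 2) <
      (1 / 18 : ℝ) *
        ∑ x : ZMod 3 × ZMod 3,
          ((∑ b ∈ Finset.univ.filter (fun b => b ≠ x.1), ((ρ x.1 x.2 * M₁ b).trace).re) +
           (∑ b ∈ Finset.univ.filter (fun b => b ≠ x.2), ((ρ x.1 x.2 * M₂ b).trace).re))) :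
    3 ≤ d := by
  classical
  by_contra hcon
  push_neg at hcon
  interval_cases d
  · -- d = 1 : success probability is exactly 2/3
    have hρ00 : ∀ x₁ x₂ : ZMod 3, ρ x₁ x₂ 0 0 = 1 := by
      intro x₁ x₂
      have h := hρ_tr x₁ x₂
      rwa [Matrix.trace, Fin.sum_univ_one] at h
    have htr1 : ∀ (x₁ x₂ b : ZMod 3), ((ρ x₁ x₂ * M₁ b).trace).re = (M₁ b 0 0).re := by
      intro x₁ x₂ b
      rw [Matrix.trace, Fin.sum_univ_one]
      simp [Matrix.mul_apply, hρ00]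
    have htr2 : ∀ (x₁ x₂ b : ZMod 3), ((ρ x₁ x₂ * M₂ b).trace).re = (M₂ b 0 0).re := by
      intro x₁ x₂ b
      rw [Matrix.trace, Fin.sum_univ_one]
      simp [Matrix.mul_apply, hρ00]
    have hsum1 : ∑ b : ZMod 3, (M₁ b 0 0).re = 1 := by
      rw [← Complex.re_sum, ← Matrix.sum_apply]
      rw [hM₁_sum]
      simp [Matrix.one_apply]
    have hsum2 : ∑ b : ZMod 3, (M₂ b 0 0).re = 1 := by
      rw [← Complex.re_sum, ← Matrix.sum_apply]
      rw [hM₂_sum]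
      simp [Matrix.one_apply]
    have hfilt1 : ∀ x : ZMod 3 × ZMod 3,
        (∑ b ∈ Finset.univ.filter (fun b => b ≠ x.1), ((ρ x.1 x.2 * M₁ b).trace).re)
          = 1 - (M₁ x.1 0 0).re := by
      intro x
      rw [Finset.filter_ne' Finset.univ x.1, Finset.sum_erase_eq_sub (Finset.mem_univ _)]
      rw [Finset.sum_congr rfl (fun b _ => htr1 x.1 x.2 b), hsum1, htr1]
    have hfilt2 : ∀ x : ZMod 3 × ZMod 3,
        (∑ b ∈ Finset.univ.filter (fun b => b ≠ x.2), ((ρ x.1 x.2 * M₂ b).trace).re)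
          = 1 - (M₂ x.2 0 0).re := by
      intro x
      rw [Finset.filter_ne' Finset.univ x.2, Finset.sum_erase_eq_sub (Finset.mem_univ _)]
      rw [Finset.sum_congr rfl (fun b _ => htr2 x.1 x.2 b), hsum2, htr2]
    have htot : (∑ x : ZMod 3 × ZMod 3,
        ((∑ b ∈ Finset.univ.filter (fun b => b ≠ x.1), ((ρ x.1 x.2 * M₁ b).trace).re) +
         (∑ b ∈ Finset.univ.filter (fun b => b ≠ x.2), ((ρ x.1 x.2 * M₂ b).trace).re)))
        = 12 := by
      rw [Finset.sum_congr rfl (fun x _ => by rw [hfilt1 x, hfilt2 x])]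
      rw [Fintype.sum_prod_type]
      have inner3 : ∀ a : ZMod 3,
          (∑ b : ZMod 3, (1 - (M₁ a 0 0).re + (1 - (M₂ b 0 0).re)))
            = 3 * (1 - (M₁ a 0 0).re) + 2 := by
        intro a
        rw [Finset.sum_add_distrib, Finset.sum_const, Finset.card_univ, ZMod.card,
          Finset.sum_sub_distrib, Finset.sum_const, Finset.card_univ, ZMod.card, hsum2]
        push_cast
        ring
      rw [Finset.sum_congr rfl (fun a _ => inner3 a)]
      rw [Finset.sum_add_distrib, Finset.sum_const, Finset.card_univ, ZMod.card,
        ← Finset.mul_sum, Finset.sum_sub_distrib, Finset.sum_const, Finset.card_univ,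
        ZMod.card, hsum1]
      push_cast
      ring
    rw [htot] at hQ
    have h2 : 0 < Real.sqrt 2 := by positivity
    norm_num at hQ
    have h3 := mul_pos (inv_pos.mpr h2) (by norm_num : (0:ℝ) < 1/3)
    linarith
  · -- d = 2 : qubit bound
    have hermρ : ∀ a b, (ρ a b).IsHermitian := fun a b => (hρ_psd a b).isHermitian
    have hermM₁ : ∀ b, (M₁ b).IsHermitian := fun b => (hM₁_psd b).isHermitian
    have hermM₂ : ∀ b, (M₂ b).IsHermitian := fun b => (hM₂_psd b).isHermitian
    have zc : ∀ z : ZMod 3, z = 0 ∨ z = 1 ∨ z = 2 := by decide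
    -- matrix-level objects
    set A : ZMod 3 → Matrix (Fin 2) (Fin 2) ℂ := fun a => ∑ b : ZMod 3, ρ a b with hAdef
    set B : ZMod 3 → Matrix (Fin 2) (Fin 2) ℂ := fun b => ∑ a : ZMod 3, ρ a b with hBdef
    set T : Matrix (Fin 2) (Fin 2) ℂ := ∑ a : ZMod 3, ∑ b : ZMod 3, ρ a b with hTdef
    set D : ZMod 3 → Matrix (Fin 2) (Fin 2) ℂ :=
      fun k => ∑ x ∈ Finset.univ.filter (fun x : ZMod 3 × ZMod 3 => x.1 + x.2 = k), ρ x.1 x.2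
      with hDdef
    set Ee : ZMod 3 → Matrix (Fin 2) (Fin 2) ℂ :=
      fun k => ∑ x ∈ Finset.univ.filter (fun x : ZMod 3 × ZMod 3 => x.1 + 2 * x.2 = k),
        ρ x.1 x.2 with hEdef
    have hPO₁' : ∀ k k', D k = D k' := fun k k' => hPO₁ k k'
    have hPO₂' : ∀ k k', Ee k = Ee k' := fun k k' => hPO₂ k k'
    have h3D : ∀ k, D k + D k + D k = T := by
      intro k
      have hfib : D 0 + D 1 + D 2 = T := by
        have h := Finset.sum_fiberwise_eq_sum_filter Finset.univ Finset.univ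
          (fun x : ZMod 3 × ZMod 3 => x.1 + x.2) (fun x => ρ x.1 x.2)
        rw [PorecAux.zmod3sum (fun k : ZMod 3 => ∑ x ∈ Finset.univ.filter
          (fun x : ZMod 3 × ZMod 3 => x.1 + x.2 = k), ρ x.1 x.2)] at h
        have hTlink : T = ∑ x : ZMod 3 × ZMod 3, ρ x.1 x.2 := by
          rw [hTdef]; exact (Fintype.sum_prod_type (f := fun x : ZMod 3 × ZMod 3 => ρ x.1 x.2)).symm
        rw [hTlink]
        exact h
      have e : D k + D k + D k = D 0 + D 1 + D 2 := by
        have e0 : D k = D 0 := hPO₁' k 0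
        have e1 : D k = D 1 := hPO₁' k 1
        have e2 : D k = D 2 := hPO₁' k 2
        rw [← e0, ← e1, ← e2]
      rw [e, hfib]
    have h3E : ∀ k, Ee k + Ee k + Ee k = T := by
      intro k
      have hfib : Ee 0 + Ee 1 + Ee 2 = T := by
        have h := Finset.sum_fiberwise_eq_sum_filter Finset.univ Finset.univ
          (fun x : ZMod 3 × ZMod 3 => x.1 + 2 * x.2) (fun x => ρ x.1 x.2)
        rw [PorecAux.zmod3sum (fun k : ZMod 3 => ∑ x ∈ Finset.univ.filter
          (fun x : ZMod 3 × ZMod 3 => x.1 + 2 * x.2 = k), ρ x.1 x.2)] at h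
        have hTlink : T = ∑ x : ZMod 3 × ZMod 3, ρ x.1 x.2 := by
          rw [hTdef]; exact (Fintype.sum_prod_type (f := fun x : ZMod 3 × ZMod 3 => ρ x.1 x.2)).symm
        rw [hTlink]
        exact h
      have e : Ee k + Ee k + Ee k = Ee 0 + Ee 1 + Ee 2 := by
        have e0 : Ee k = Ee 0 := hPO₂' k 0
        have e1 : Ee k = Ee 1 := hPO₂' k 1
        have e2 : Ee k = Ee 2 := hPO₂' k 2
        rw [← e0, ← e1, ← e2]
      rw [e, hfib]
    -- explicit expansions
    have eA : ∀ a, A a = ρ a 0 + ρ a 1 + ρ a 2 := fun a => PorecAux.zmod3sum (fun b => ρ a b)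
    have eB : ∀ b, B b = ρ 0 b + ρ 1 b + ρ 2 b := fun b => PorecAux.zmod3sum (fun a => ρ a b)
    have eT : T = ρ 0 0 + ρ 0 1 + ρ 0 2 + (ρ 1 0 + ρ 1 1 + ρ 1 2) + (ρ 2 0 + ρ 2 1 + ρ 2 2) := by
      rw [hTdef, PorecAux.zmod3sum (fun a => ∑ b : ZMod 3, ρ a b),
        PorecAux.zmod3sum (fun b => ρ 0 b), PorecAux.zmod3sum (fun b => ρ 1 b),
        PorecAux.zmod3sum (fun b => ρ 2 b)]
    have eD0 : D 0 = ρ 0 0 + ρ 1 2 + ρ 2 1 := by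
      show (∑ x ∈ Finset.univ.filter (fun x : ZMod 3 × ZMod 3 => x.1 + x.2 = 0), ρ x.1 x.2) = _
      rw [show Finset.univ.filter (fun x : ZMod 3 × ZMod 3 => x.1 + x.2 = 0)
          = ({(0,0),(1,2),(2,1)} : Finset (ZMod 3 × ZMod 3)) from by decide,
        Finset.sum_insert (by decide), Finset.sum_insert (by decide), Finset.sum_singleton]
      exact (add_assoc _ _ _).symm
    have eD1 : D 1 = ρ 0 1 + ρ 1 0 + ρ 2 2 := by
      show (∑ x ∈ Finset.univ.filter (fun x : ZMod 3 × ZMod 3 => x.1 + x.2 = 1), ρ x.1 x.2) = _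
      rw [show Finset.univ.filter (fun x : ZMod 3 × ZMod 3 => x.1 + x.2 = 1)
          = ({(0,1),(1,0),(2,2)} : Finset (ZMod 3 × ZMod 3)) from by decide,
        Finset.sum_insert (by decide), Finset.sum_insert (by decide), Finset.sum_singleton]
      exact (add_assoc _ _ _).symm
    have eD2 : D 2 = ρ 0 2 + ρ 1 1 + ρ 2 0 := by
      show (∑ x ∈ Finset.univ.filter (fun x : ZMod 3 × ZMod 3 => x.1 + x.2 = 2), ρ x.1 x.2) = _
      rw [show Finset.univ.filter (fun x : ZMod 3 × ZMod 3 => x.1 + x.2 = 2)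
          = ({(0,2),(1,1),(2,0)} : Finset (ZMod 3 × ZMod 3)) from by decide,
        Finset.sum_insert (by decide), Finset.sum_insert (by decide), Finset.sum_singleton]
      exact (add_assoc _ _ _).symm
    have eE0 : Ee 0 = ρ 0 0 + ρ 1 1 + ρ 2 2 := by
      show (∑ x ∈ Finset.univ.filter (fun x : ZMod 3 × ZMod 3 => x.1 + 2 * x.2 = 0),
        ρ x.1 x.2) = _
      rw [show Finset.univ.filter (fun x : ZMod 3 × ZMod 3 => x.1 + 2 * x.2 = 0)
          = ({(0,0),(1,1),(2,2)} : Finset (ZMod 3 × ZMod 3)) from by decide,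
        Finset.sum_insert (by decide), Finset.sum_insert (by decide), Finset.sum_singleton]
      exact (add_assoc _ _ _).symm
    have eE1 : Ee 1 = ρ 1 0 + ρ 0 2 + ρ 2 1 := by
      show (∑ x ∈ Finset.univ.filter (fun x : ZMod 3 × ZMod 3 => x.1 + 2 * x.2 = 1),
        ρ x.1 x.2) = _
      rw [show Finset.univ.filter (fun x : ZMod 3 × ZMod 3 => x.1 + 2 * x.2 = 1)
          = ({(1,0),(0,2),(2,1)} : Finset (ZMod 3 × ZMod 3)) from by decide,
        Finset.sum_insert (by decide), Finset.sum_insert (by decide), Finset.sum_singleton]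
      exact (add_assoc _ _ _).symm
    have eE2 : Ee 2 = ρ 2 0 + ρ 0 1 + ρ 1 2 := by
      show (∑ x ∈ Finset.univ.filter (fun x : ZMod 3 × ZMod 3 => x.1 + 2 * x.2 = 2),
        ρ x.1 x.2) = _
      rw [show Finset.univ.filter (fun x : ZMod 3 × ZMod 3 => x.1 + 2 * x.2 = 2)
          = ({(2,0),(0,1),(1,2)} : Finset (ZMod 3 × ZMod 3)) from by decide,
        Finset.sum_insert (by decide), Finset.sum_insert (by decide), Finset.sum_singleton]
      exact (add_assoc _ _ _).symm
    -- the key linear identity from parity obliviousness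
    have nine : ∀ a b : ZMod 3, (3:ℕ)•A a + (3:ℕ)•B b = (9:ℕ)•ρ a b + T := by
      intro a b
      rcases zc a with rfl | rfl | rfl <;> rcases zc b with rfl | rfl | rfl
      · have key : (3:ℕ)•A 0 + (3:ℕ)•B 0 + (D 0 + D 0 + D 0) + (Ee 0 + Ee 0 + Ee 0)
            = ((9:ℕ)•ρ 0 0 + T + T) + T := by
          rw [eA 0, eB 0, eD0, eE0, eT]; abel
        rw [h3D 0, h3E 0] at key
        exact add_right_cancel (add_right_cancel key)
      · have key : (3:ℕ)•A 0 + (3:ℕ)•B 1 + (D 1 + D 1 + D 1) + (Ee 2 + Ee 2 + Ee 2)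
            = ((9:ℕ)•ρ 0 1 + T + T) + T := by
          rw [eA 0, eB 1, eD1, eE2, eT]; abel
        rw [h3D 1, h3E 2] at key
        exact add_right_cancel (add_right_cancel key)
      · have key : (3:ℕ)•A 0 + (3:ℕ)•B 2 + (D 2 + D 2 + D 2) + (Ee 1 + Ee 1 + Ee 1)
            = ((9:ℕ)•ρ 0 2 + T + T) + T := by
          rw [eA 0, eB 2, eD2, eE1, eT]; abel
        rw [h3D 2, h3E 1] at key
        exact add_right_cancel (add_right_cancel key)
      · have key : (3:ℕ)•A 1 + (3:ℕ)•B 0 + (D 1 + D 1 + D 1) + (Ee 1 + Ee 1 + Ee 1)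
            = ((9:ℕ)•ρ 1 0 + T + T) + T := by
          rw [eA 1, eB 0, eD1, eE1, eT]; abel
        rw [h3D 1, h3E 1] at key
        exact add_right_cancel (add_right_cancel key)
      · have key : (3:ℕ)•A 1 + (3:ℕ)•B 1 + (D 2 + D 2 + D 2) + (Ee 0 + Ee 0 + Ee 0)
            = ((9:ℕ)•ρ 1 1 + T + T) + T := by
          rw [eA 1, eB 1, eD2, eE0, eT]; abel
        rw [h3D 2, h3E 0] at key
        exact add_right_cancel (add_right_cancel key)
      · have key : (3:ℕ)•A 1 + (3:ℕ)•B 2 + (D 0 + D 0 + D 0) + (Ee 2 + Ee 2 + Ee 2)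
            = ((9:ℕ)•ρ 1 2 + T + T) + T := by
          rw [eA 1, eB 2, eD0, eE2, eT]; abel
        rw [h3D 0, h3E 2] at key
        exact add_right_cancel (add_right_cancel key)
      · have key : (3:ℕ)•A 2 + (3:ℕ)•B 0 + (D 2 + D 2 + D 2) + (Ee 2 + Ee 2 + Ee 2)
            = ((9:ℕ)•ρ 2 0 + T + T) + T := by
          rw [eA 2, eB 0, eD2, eE2, eT]; abel
        rw [h3D 2, h3E 2] at key
        exact add_right_cancel (add_right_cancel key)
      · have key : (3:ℕ)•A 2 + (3:ℕ)•B 1 + (D 0 + D 0 + D 0) + (Ee 1 + Ee 1 + Ee 1)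
            = ((9:ℕ)•ρ 2 1 + T + T) + T := by
          rw [eA 2, eB 1, eD0, eE1, eT]; abel
        rw [h3D 0, h3E 1] at key
        exact add_right_cancel (add_right_cancel key)
      · have key : (3:ℕ)•A 2 + (3:ℕ)•B 2 + (D 1 + D 1 + D 1) + (Ee 0 + Ee 0 + Ee 0)
            = ((9:ℕ)•ρ 2 2 + T + T) + T := by
          rw [eA 2, eB 2, eD1, eE0, eT]; abel
        rw [h3D 1, h3E 0] at key
        exact add_right_cancel (add_right_cancel key)
        -- Bloch-vector level
    have hsumu1 : ∑ b : ZMod 3, PorecAux.bV (M₁ b) = 0 := by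
      rw [← map_sum, hM₁_sum, PorecAux.bV_one]
    have hsumu2 : ∑ b : ZMod 3, PorecAux.bV (M₂ b) = 0 := by
      rw [← map_sum, hM₂_sum, PorecAux.bV_one]
    have hbT1sum : ∑ b : ZMod 3, PorecAux.bT (M₁ b) = 2 := by
      rw [← map_sum, hM₁_sum, PorecAux.bT_one]
    have hbT2sum : ∑ b : ZMod 3, PorecAux.bT (M₂ b) = 2 := by
      rw [← map_sum, hM₂_sum, PorecAux.bT_one]
    have hu1norm : ∑ b : ZMod 3, ‖PorecAux.bV (M₁ b)‖ ≤ 1 := by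
      calc ∑ b : ZMod 3, ‖PorecAux.bV (M₁ b)‖ ≤ ∑ b : ZMod 3, PorecAux.bT (M₁ b) / 2 :=
            Finset.sum_le_sum fun b _ => PorecAux.psd_norm_le (hM₁_psd b)
        _ = 1 := by rw [← Finset.sum_div, hbT1sum]; norm_num
    have hu2norm : ∑ b : ZMod 3, ‖PorecAux.bV (M₂ b)‖ ≤ 1 := by
      calc ∑ b : ZMod 3, ‖PorecAux.bV (M₂ b)‖ ≤ ∑ b : ZMod 3, PorecAux.bT (M₂ b) / 2 :=
            Finset.sum_le_sum fun b _ => PorecAux.psd_norm_le (hM₂_psd b)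
        _ = 1 := by rw [← Finset.sum_div, hbT2sum]; norm_num
    have hbTρ : ∀ a b, PorecAux.bT (ρ a b) = 1 := by
      intro a b
      have h := hρ_tr a b
      rw [Matrix.trace_fin_two] at h
      have h2 := congrArg Complex.re h
      rw [Complex.add_re, Complex.one_re] at h2
      exact h2
    have hrn : ∀ a b, ‖PorecAux.bV (ρ a b)‖ ≤ 1 / 2 := by
      intro a b
      have h := PorecAux.psd_norm_le (hρ_psd a b)
      rwa [hbTρ a b] at h
    have nineV : ∀ a b : ZMod 3,
        (3:ℝ) • PorecAux.bV (A a) + (3:ℝ) • PorecAux.bV (B b)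
          = (9:ℝ) • PorecAux.bV (ρ a b) + PorecAux.bV T := by
      intro a b
      have h := congrArg PorecAux.bV (nine a b)
      rw [map_add, map_add, map_nsmul, map_nsmul, map_nsmul] at h
      have c3 : ∀ v : EuclideanSpace ℝ (Fin 3), (3:ℕ) • v = (3:ℝ) • v := fun v => by
        rw [← Nat.cast_smul_eq_nsmul ℝ]; norm_num
      have c9 : ∀ v : EuclideanSpace ℝ (Fin 3), (9:ℕ) • v = (9:ℝ) • v := fun v => by
        rw [← Nat.cast_smul_eq_nsmul ℝ]; norm_num
      rw [c3, c3, c9] at h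
      exact h
    set gv : ZMod 3 → EuclideanSpace ℝ (Fin 3) :=
      fun a => (2/3 : ℝ) • PorecAux.bV (A a) - (1/9 : ℝ) • PorecAux.bV T with hgvdef
    set hv : ZMod 3 → EuclideanSpace ℝ (Fin 3) :=
      fun b => (2/3 : ℝ) • PorecAux.bV (B b) - (1/9 : ℝ) • PorecAux.bV T with hhvdef
    have hgh : ∀ a b, ‖gv a + hv b‖ ≤ 1 := by
      intro a b
      have h9 := nineV a b
      have hcomb : gv a + hv b
          = (2/9 : ℝ) • ((3:ℝ) • PorecAux.bV (A a) + (3:ℝ) • PorecAux.bV (B b))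
            - (2/9 : ℝ) • PorecAux.bV T := by
        simp only [hgvdef, hhvdef]
        module
      rw [hcomb, h9]
      have hred : (2/9 : ℝ) • ((9:ℝ) • PorecAux.bV (ρ a b) + PorecAux.bV T)
          - (2/9 : ℝ) • PorecAux.bV T = (2:ℝ) • PorecAux.bV (ρ a b) := by
        module
      rw [hred, norm_smul]
      have h2 : ‖(2:ℝ)‖ = 2 := by norm_num
      rw [h2]
      have := hrn a b
      linarith
    have hgeom := geom (E := EuclideanSpace ℝ (Fin 3)) (ι := ZMod 3) gv hv
      (fun b => PorecAux.bV (M₁ b)) (fun b => PorecAux.bV (M₂ b))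
      hsumu1 hsumu2 hu1norm hu2norm hgh
    -- rewrite the success probability
    have hre1 : ∀ a b c' : ZMod 3, ((ρ a b * M₁ c').trace).re
        = PorecAux.bT (M₁ c') / 2 + 2 * ⟪PorecAux.bV (ρ a b), PorecAux.bV (M₁ c')⟫ := by
      intro a b c'
      rw [PorecAux.reTrace_mul (hermρ a b) (hermM₁ c'), hbTρ a b]
      ring
    have hre2 : ∀ a b c' : ZMod 3, ((ρ a b * M₂ c').trace).re
        = PorecAux.bT (M₂ c') / 2 + 2 * ⟪PorecAux.bV (ρ a b), PorecAux.bV (M₂ c')⟫ := by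
      intro a b c'
      rw [PorecAux.reTrace_mul (hermρ a b) (hermM₂ c'), hbTρ a b]
      ring
    have hall1 : ∀ a b : ZMod 3, ∑ c' : ZMod 3, ((ρ a b * M₁ c').trace).re = 1 := by
      intro a b
      rw [← Complex.re_sum, ← Matrix.trace_sum, ← Finset.mul_sum, hM₁_sum, mul_one,
        hρ_tr, Complex.one_re]
    have hall2 : ∀ a b : ZMod 3, ∑ c' : ZMod 3, ((ρ a b * M₂ c').trace).re = 1 := by
      intro a b
      rw [← Complex.re_sum, ← Matrix.trace_sum, ← Finset.mul_sum, hM₂_sum, mul_one,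
        hρ_tr, Complex.one_re]
    have hx1 : ∀ x : ZMod 3 × ZMod 3,
        (∑ b ∈ Finset.univ.filter (fun b => b ≠ x.1), ((ρ x.1 x.2 * M₁ b).trace).re)
          = 1 - (PorecAux.bT (M₁ x.1) / 2
            + 2 * ⟪PorecAux.bV (ρ x.1 x.2), PorecAux.bV (M₁ x.1)⟫) := by
      intro x
      rw [Finset.filter_ne' Finset.univ x.1, Finset.sum_erase_eq_sub (Finset.mem_univ _),
        hall1, hre1]
    have hx2 : ∀ x : ZMod 3 × ZMod 3,
        (∑ b ∈ Finset.univ.filter (fun b => b ≠ x.2), ((ρ x.1 x.2 * M₂ b).trace).re)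
          = 1 - (PorecAux.bT (M₂ x.2) / 2
            + 2 * ⟪PorecAux.bV (ρ x.1 x.2), PorecAux.bV (M₂ x.2)⟫) := by
      intro x
      rw [Finset.filter_ne' Finset.univ x.2, Finset.sum_erase_eq_sub (Finset.mem_univ _),
        hall2, hre2]
    set S1 : ℝ := ∑ x : ZMod 3 × ZMod 3,
      ⟪PorecAux.bV (ρ x.1 x.2), PorecAux.bV (M₁ x.1)⟫ with hS1def
    set S2 : ℝ := ∑ x : ZMod 3 × ZMod 3,
      ⟪PorecAux.bV (ρ x.1 x.2), PorecAux.bV (M₂ x.2)⟫ with hS2def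
    have hPtot : (∑ x : ZMod 3 × ZMod 3,
        ((∑ b ∈ Finset.univ.filter (fun b => b ≠ x.1), ((ρ x.1 x.2 * M₁ b).trace).re) +
         (∑ b ∈ Finset.univ.filter (fun b => b ≠ x.2), ((ρ x.1 x.2 * M₂ b).trace).re)))
        = 12 - 2 * (S1 + S2) := by
      rw [Finset.sum_congr rfl (fun x _ => by rw [hx1 x, hx2 x])]
      have expand : ∀ x : ZMod 3 × ZMod 3,
          (1 - (PorecAux.bT (M₁ x.1) / 2
              + 2 * ⟪PorecAux.bV (ρ x.1 x.2), PorecAux.bV (M₁ x.1)⟫))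
            + (1 - (PorecAux.bT (M₂ x.2) / 2
              + 2 * ⟪PorecAux.bV (ρ x.1 x.2), PorecAux.bV (M₂ x.2)⟫))
          = 2 - PorecAux.bT (M₁ x.1) / 2 - PorecAux.bT (M₂ x.2) / 2
            - (2 * ⟪PorecAux.bV (ρ x.1 x.2), PorecAux.bV (M₁ x.1)⟫
              + 2 * ⟪PorecAux.bV (ρ x.1 x.2), PorecAux.bV (M₂ x.2)⟫) := fun x => by ring
      rw [Finset.sum_congr rfl (fun x _ => expand x),
        Finset.sum_sub_distrib, Finset.sum_sub_distrib, Finset.sum_sub_distrib,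
        Finset.sum_add_distrib]
      have p0 : ∑ _x : ZMod 3 × ZMod 3, (2:ℝ) = 18 := by
        rw [Finset.sum_const, Finset.card_univ]
        simp [Fintype.card_prod, ZMod.card]
        norm_num
      have p1 : ∑ x : ZMod 3 × ZMod 3, PorecAux.bT (M₁ x.1) / 2 = 3 := by
        rw [Fintype.sum_prod_type]
        have inner1 : ∀ a : ZMod 3,
            (∑ _b : ZMod 3, PorecAux.bT (M₁ a) / 2) = 3 * (PorecAux.bT (M₁ a) / 2) := by
          intro a
          rw [Finset.sum_const, Finset.card_univ, ZMod.card, nsmul_eq_mul]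
          norm_num
        rw [Finset.sum_congr rfl (fun a _ => inner1 a), ← Finset.mul_sum,
          ← Finset.sum_div, hbT1sum]
        norm_num
      have p2 : ∑ x : ZMod 3 × ZMod 3, PorecAux.bT (M₂ x.2) / 2 = 3 := by
        rw [Fintype.sum_prod_type]
        have inner2 : (∑ b : ZMod 3, PorecAux.bT (M₂ b) / 2) = 1 := by
          rw [← Finset.sum_div, hbT2sum]; norm_num
        rw [Finset.sum_congr rfl (fun a _ => inner2), Finset.sum_const, Finset.card_univ,
          ZMod.card, nsmul_eq_mul]
        norm_num
      have p3a : ∑ x : ZMod 3 × ZMod 3,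
          2 * ⟪PorecAux.bV (ρ x.1 x.2), PorecAux.bV (M₁ x.1)⟫ = 2 * S1 := by
        rw [← Finset.mul_sum, ← hS1def]
      have p3b : ∑ x : ZMod 3 × ZMod 3,
          2 * ⟪PorecAux.bV (ρ x.1 x.2), PorecAux.bV (M₂ x.2)⟫ = 2 * S2 := by
        rw [← Finset.mul_sum, ← hS2def]
      rw [p0, p1, p2, p3a, p3b]
      ring
    have hS1split : S1 = ∑ a : ZMod 3, ⟪PorecAux.bV (A a), PorecAux.bV (M₁ a)⟫ := by
      rw [hS1def, Fintype.sum_prod_type]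
      refine Finset.sum_congr rfl fun a _ => ?_
      show ∑ b : ZMod 3, ⟪PorecAux.bV (ρ a b), PorecAux.bV (M₁ a)⟫ = _
      rw [show PorecAux.bV (A a) = ∑ b : ZMod 3, PorecAux.bV (ρ a b) from map_sum _ _ _]
      exact (sum_inner _ _ _).symm
    have hS2split : S2 = ∑ b : ZMod 3, ⟪PorecAux.bV (B b), PorecAux.bV (M₂ b)⟫ := by
      rw [hS2def, Fintype.sum_prod_type, Finset.sum_comm]
      refine Finset.sum_congr rfl fun b _ => ?_
      show ∑ a : ZMod 3, ⟪PorecAux.bV (ρ a b), PorecAux.bV (M₂ b)⟫ = _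
      rw [show PorecAux.bV (B b) = ∑ a : ZMod 3, PorecAux.bV (ρ a b) from map_sum _ _ _]
      exact (sum_inner _ _ _).symm
    have hgvsum : ∑ a : ZMod 3, ⟪gv a, PorecAux.bV (M₁ a)⟫
        = (2/3) * ∑ a : ZMod 3, ⟪PorecAux.bV (A a), PorecAux.bV (M₁ a)⟫ := by
      have e : ∀ a : ZMod 3, ⟪gv a, PorecAux.bV (M₁ a)⟫
          = (2/3) * ⟪PorecAux.bV (A a), PorecAux.bV (M₁ a)⟫
            - (1/9) * ⟪PorecAux.bV T, PorecAux.bV (M₁ a)⟫ := by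
        intro a
        simp only [hgvdef]
        rw [inner_sub_left, real_inner_smul_left, real_inner_smul_left]
      rw [Finset.sum_congr rfl (fun a _ => e a), Finset.sum_sub_distrib,
        ← Finset.mul_sum, ← Finset.mul_sum]
      have hz : ∑ a : ZMod 3, ⟪PorecAux.bV T, PorecAux.bV (M₁ a)⟫ = 0 := by
        rw [← inner_sum, ← map_sum, hM₁_sum, PorecAux.bV_one, inner_zero_right]
      rw [hz]
      ring
    have hhvsum : ∑ b : ZMod 3, ⟪hv b, PorecAux.bV (M₂ b)⟫
        = (2/3) * ∑ b : ZMod 3, ⟪PorecAux.bV (B b), PorecAux.bV (M₂ b)⟫ := by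
      have e : ∀ b : ZMod 3, ⟪hv b, PorecAux.bV (M₂ b)⟫
          = (2/3) * ⟪PorecAux.bV (B b), PorecAux.bV (M₂ b)⟫
            - (1/9) * ⟪PorecAux.bV T, PorecAux.bV (M₂ b)⟫ := by
        intro b
        simp only [hhvdef]
        rw [inner_sub_left, real_inner_smul_left, real_inner_smul_left]
      rw [Finset.sum_congr rfl (fun b _ => e b), Finset.sum_sub_distrib,
        ← Finset.mul_sum, ← Finset.mul_sum]
      have hz : ∑ b : ZMod 3, ⟪PorecAux.bV T, PorecAux.bV (M₂ b)⟫ = 0 := by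
        rw [← inner_sum, ← map_sum, hM₂_sum, PorecAux.bV_one, inner_zero_right]
      rw [hz]
      ring
    rw [hPtot, hS1split, hS2split] at hQ
    rw [hgvsum, hhvsum] at hgeom
    have hs2 : Real.sqrt 2 ^ 2 = 2 := Real.sq_sqrt (by norm_num)
    have hspos : 0 < Real.sqrt 2 := Real.sqrt_pos.mpr (by norm_num)
    have hinv : 1 / (3 * Real.sqrt 2) * (3 * Real.sqrt 2) = 1 := by
      field_simp
    nlinarith [hQ, hgeom, hs2, hspos, hinv]
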